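/- arXiv:0906.2318 — 3 statements merged into one kernel-verified Lean document; each statement's English description precedes it below -/
import Mathlib

section
/- Let X = (X_t)_{t≥0} be a càdlàg process adapted to 𝔽. Then X satisfies the no arbitrage property with respect to the Cheridito class Π(𝔽) if and only if for every h > 0, every pair of bounded 𝔽-stopping times τ₀, τ₁ with τ₁ ≥ τ₀ + h, and every event A ∈ F_{τ₀}, the random variable 1_A·(X_{τ₁} − X_{τ₀}) belongs to L⁰_{+−}. -/
open MeasureTheory ProbabilityTheory Filter Set
open scoped NNReal ENNReal

variable {Ω : Type*} {m0 : MeasurableSpace Ω}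

/-- A simple predictable integrand with bounded support for the filtration `ℱ`:
`H = g₀ 1_{{0}} + ∑_{j=1}^{n-1} g_j 1_{(τ_j, τ_{j+1}]}` with `n ≥ 2`,
`0 ≤ τ₁ ≤ ⋯ ≤ τ_n` stopping times, `τ_n` bounded, and `g_j` being `F_{τ_j}`-measurable. -/
structure SimpleStrategy (ℱ : MeasureTheory.Filtration ℝ≥0 m0) where
  n : ℕ
  two_le : 2 ≤ n
  g0 : ℝ
  τ : ℕ → Ω → ℝ≥0
  g : ℕ → Ω → ℝ
  stopping : ∀ j, 1 ≤ j → j ≤ n → MeasureTheory.IsStoppingTime ℱ (fun ω => (τ j ω : WithTop ℝ≥0))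
  mono : ∀ j, 1 ≤ j → j < n → ∀ ω, τ j ω ≤ τ (j + 1) ω
  bounded : ∃ T : ℝ≥0, ∀ ω, τ n ω ≤ T
  g_meas : ∀ j (h1 : 1 ≤ j) (h2 : j < n),
    Measurable[(stopping j h1 h2.le).measurableSpace] (g j)

/-- terminal gain `(H ⬝ X)_∞ = ∑_{j=1}^{n-1} g_j (X_{τ_{j+1}} - X_{τ_j})`. -/
def SimpleStrategy.gains {ℱ : MeasureTheory.Filtration ℝ≥0 m0}
    (H : SimpleStrategy ℱ) (X : ℝ≥0 → Ω → ℝ) (ω : Ω) : ℝ :=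
  ∑ j ∈ Finset.Ico 1 H.n, H.g j ω * (X (H.τ (j + 1) ω) ω - X (H.τ j ω) ω)

/-- membership in `Sʰ(𝔽)` : the jump times are at least `h` apart. -/
def SimpleStrategy.Spaced {ℱ : MeasureTheory.Filtration ℝ≥0 m0}
    (H : SimpleStrategy ℱ) (h : ℝ≥0) : Prop :=
  ∀ j, 1 ≤ j → j < H.n → ∀ ω, H.τ j ω + h ≤ H.τ (j + 1) ω

/-- `H` is an arbitrage for `X` under `μ`. -/
def IsArbitrage {ℱ : MeasureTheory.Filtration ℝ≥0 m0} (μ : MeasureTheory.Measure Ω)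
    (X : ℝ≥0 → Ω → ℝ) (H : SimpleStrategy ℱ) : Prop :=
  (∀ᵐ ω ∂μ, 0 ≤ H.gains X ω) ∧ 0 < μ {ω | 0 < H.gains X ω}

/-- no arbitrage in the class `S(𝔽)` of simple predictable integrands of bounded support. -/
def NoArbitrageSimple (μ : MeasureTheory.Measure Ω) (ℱ : MeasureTheory.Filtration ℝ≥0 m0)
    (X : ℝ≥0 → Ω → ℝ) : Prop :=
  ¬ ∃ H : SimpleStrategy ℱ, IsArbitrage μ X H

/-- no arbitrage in the Cheridito class `Π(𝔽) = ⋃_{h>0} Sʰ(𝔽)`. -/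
def NoArbitrageCC (μ : MeasureTheory.Measure Ω) (ℱ : MeasureTheory.Filtration ℝ≥0 m0)
    (X : ℝ≥0 → Ω → ℝ) : Prop :=
  ¬ ∃ (h : ℝ≥0) (H : SimpleStrategy ℱ), 0 < h ∧ H.Spaced h ∧ IsArbitrage μ X H

/-- `η ∈ L⁰_{+-}` : `η` is neither a nonnegative r.v. that is positive with positive
probability, nor a nonpositive r.v. that is negative with positive probability. -/
def MemLzeroPM (μ : MeasureTheory.Measure Ω) (η : Ω → ℝ) : Prop :=
  ¬ ((∀ᵐ ω ∂μ, 0 ≤ η ω) ∧ 0 < μ {ω | 0 < η ω}) ∧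
  ¬ ((∀ᵐ ω ∂μ, η ω ≤ 0) ∧ 0 < μ {ω | η ω < 0})

/-- all paths are right continuous with left limits. -/
def IsCadlag (X : ℝ≥0 → Ω → ℝ) : Prop :=
  ∀ ω, (∀ t : ℝ≥0, ContinuousWithinAt (fun s => X s ω) (Set.Ici t) t) ∧
    (∀ t : ℝ≥0, 0 < t →
      ∃ l : ℝ, Filter.Tendsto (fun s => X s ω) (nhdsWithin t (Set.Iio t)) (nhds l))

/-- a standard Brownian motion w.r.t. the filtration `ℱ`. -/
def IsStandardBM (μ : MeasureTheory.Measure Ω) (ℱ : MeasureTheory.Filtration ℝ≥0 m0)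
    (B : ℝ≥0 → Ω → ℝ) : Prop :=
  MeasureTheory.Adapted ℱ B ∧ (∀ ω, B 0 ω = 0) ∧ (∀ ω, Continuous fun t => B t ω) ∧
  ∀ s t : ℝ≥0, s < t →
    ProbabilityTheory.Indep
      (MeasurableSpace.comap (fun ω => B t ω - B s ω) (inferInstance : MeasurableSpace ℝ))
      (ℱ s) μ ∧
    MeasureTheory.Measure.map (fun ω => B t ω - B s ω) μ =
      ProbabilityTheory.gaussianReal 0 (t - s)

-- helpers to be inserted above stmt0
/-- the right-hand side condition of Lemma 1, as a definition. -/
def CondRHS (μ : MeasureTheory.Measure Ω) (ℱ : MeasureTheory.Filtration ℝ≥0 m0)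
    (X : ℝ≥0 → Ω → ℝ) : Prop :=
  ∀ (h : ℝ≥0), 0 < h →
    ∀ (τ0 τ1 : Ω → ℝ≥0)
      (hτ0 : MeasureTheory.IsStoppingTime ℱ (fun ω => (τ0 ω : WithTop ℝ≥0)))
      (_hτ1 : MeasureTheory.IsStoppingTime ℱ (fun ω => (τ1 ω : WithTop ℝ≥0))),
      (∃ T : ℝ≥0, ∀ ω, τ0 ω ≤ T) → (∃ T : ℝ≥0, ∀ ω, τ1 ω ≤ T) →
      (∀ ω, τ0 ω + h ≤ τ1 ω) →
      ∀ A : Set Ω, MeasurableSet[hτ0.measurableSpace] A →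
        MemLzeroPM μ (A.indicator fun ω => X (τ1 ω) ω - X (τ0 ω) ω)

lemma meas_pos_of_subset_union {μ : MeasureTheory.Measure Ω} {s t N : Set Ω}
    (hsub : s ⊆ t ∪ N) (hN : μ N = 0) (hs : 0 < μ s) : 0 < μ t := by
  have h1 : μ s ≤ μ t + μ N := (measure_mono hsub).trans (measure_union_le t N)
  rw [hN, add_zero] at h1
  exact lt_of_lt_of_le hs h1

lemma progMeasurable_of_cadlag {ℱ : MeasureTheory.Filtration ℝ≥0 m0} {X : ℝ≥0 → Ω → ℝ}
    (hadapted : MeasureTheory.Adapted ℱ X) (hcadlag : IsCadlag X) :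
    MeasureTheory.ProgMeasurable ℱ X := by
  intro i
  let m' : MeasurableSpace (Set.Iic i × Ω) := Subtype.instMeasurableSpace.prod (ℱ i)
  have two_ne : ∀ n : ℕ, ((2:ℝ≥0) ^ n) ≠ 0 := fun n => pow_ne_zero n two_ne_zero
  set G : ℕ → Set.Iic i × Ω → ℝ :=
    fun n p => X (min i (((⌊(p.1 : ℝ≥0) * 2 ^ n⌋₊ : ℝ≥0) + 1) / 2 ^ n)) p.2 with hG
  have hGmeas : ∀ n, Measurable[m'] (G n) := by
    intro n
    have houter : @Measurable (Ω × ℕ) ℝ (MeasurableSpace.prod (ℱ i) ⊤) _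
        (fun q : Ω × ℕ => X (min i (((q.2 : ℝ≥0) + 1) / 2 ^ n)) q.1) := by
      refine measurable_from_prod_countable_left (m := ℱ i) fun k => ?_
      dsimp only
      exact ((hadapted _).mono (ℱ.mono (min_le_left _ _)) le_rfl)
    have hsnd : @Measurable (Set.Iic i × Ω) Ω m' (ℱ i) (fun p => p.2) :=
      @measurable_snd (Set.Iic i) Ω inferInstance (ℱ i)
    have hfst : Measurable[m'] (fun p : Set.Iic i × Ω => (p.1 : ℝ≥0)) :=
      measurable_subtype_coe.comp (@measurable_fst (Set.Iic i) Ω inferInstance (ℱ i))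
    have hinner : @Measurable (Set.Iic i × Ω) (Ω × ℕ) m' (MeasurableSpace.prod (ℱ i) ⊤)
        (fun p => ((p.2, ⌊(p.1 : ℝ≥0) * 2 ^ n⌋₊) : Ω × ℕ)) :=
      hsnd.prodMk (Nat.measurable_floor.comp (hfst.mul measurable_const))
    have hcomp := houter.comp hinner
    exact hcomp
  have hGtendsto : ∀ p : Set.Iic i × Ω,
      Filter.Tendsto (fun n => G n p) Filter.atTop (nhds (X (p.1 : ℝ≥0) p.2)) := by
    intro p
    set s : ℝ≥0 := (p.1 : ℝ≥0)
    set a : ℕ → ℝ≥0 := fun n => min i (((⌊s * 2 ^ n⌋₊ : ℝ≥0) + 1) / 2 ^ n) with ha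
    have h1 : ∀ n, s ≤ a n := by
      intro n
      refine le_min p.1.2 ?_
      rw [le_div_iff₀ (zero_lt_iff.mpr (two_ne n))]
      exact (Nat.lt_floor_add_one (s * 2 ^ n)).le
    have h2 : ∀ n, a n ≤ s + ((2:ℝ≥0)⁻¹) ^ n := by
      intro n
      refine (min_le_right _ _).trans ?_
      rw [div_le_iff₀ (zero_lt_iff.mpr (two_ne n)), add_mul]
      gcongr
      · exact Nat.floor_le zero_le
      · rw [← mul_pow, inv_mul_cancel₀ (two_ne_zero), one_pow]
    have htends : Filter.Tendsto a Filter.atTop (nhds s) := by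
      have : Filter.Tendsto (fun n => s + ((2:ℝ≥0)⁻¹) ^ n) Filter.atTop (nhds (s + 0)) :=
        tendsto_const_nhds.add (NNReal.tendsto_pow_atTop_nhds_zero_of_lt_one
          (by rw [← NNReal.coe_lt_coe]; norm_num))
      rw [add_zero] at this
      exact tendsto_of_tendsto_of_tendsto_of_le_of_le (g := fun _ => s)
        tendsto_const_nhds this h1 h2
    have htendsW : Filter.Tendsto a Filter.atTop (nhdsWithin s (Set.Ici s)) :=
      tendsto_nhdsWithin_of_tendsto_nhds_of_eventually_within _ htends
        (Filter.Eventually.of_forall fun n => h1 n)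
    exact ((hcadlag p.2).1 s).tendsto.comp htendsW
  have hlim : Measurable[m'] (fun p : Set.Iic i × Ω => X (p.1 : ℝ≥0) p.2) := by
    refine measurable_of_tendsto_metrizable' (f := G) Filter.atTop hGmeas ?_
    rw [tendsto_pi_nhds]
    exact hGtendsto
  exact hlim.stronglyMeasurable

/-- the fundamental one-step contradiction: if `1_B g ΔX ≥ 0` a.e. and positive with
positive probability, the RHS condition is violated. -/
lemma one_step_contra {μ : MeasureTheory.Measure Ω} {ℱ : MeasureTheory.Filtration ℝ≥0 m0}
    {X : ℝ≥0 → Ω → ℝ} (cond : CondRHS μ ℱ X) {h : ℝ≥0} (hh : 0 < h) {τ0 τ1 : Ω → ℝ≥0}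
    (hτ0 : MeasureTheory.IsStoppingTime ℱ (fun ω => (τ0 ω : WithTop ℝ≥0))) (hτ1 : MeasureTheory.IsStoppingTime ℱ (fun ω => (τ1 ω : WithTop ℝ≥0)))
    (hb0 : ∃ T : ℝ≥0, ∀ ω, τ0 ω ≤ T) (hb1 : ∃ T : ℝ≥0, ∀ ω, τ1 ω ≤ T)
    (hspace : ∀ ω, τ0 ω + h ≤ τ1 ω) {g : Ω → ℝ}
    (hg : Measurable[hτ0.measurableSpace] g) {B : Set Ω}
    (hB : MeasurableSet[hτ0.measurableSpace] B)
    (hpos : ∀ᵐ ω ∂μ, ω ∈ B → 0 ≤ g ω * (X (τ1 ω) ω - X (τ0 ω) ω))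
    (hstrict : 0 < μ {ω | ω ∈ B ∧ 0 < g ω * (X (τ1 ω) ω - X (τ0 ω) ω)}) : False := by
  set D : Ω → ℝ := fun ω => X (τ1 ω) ω - X (τ0 ω) ω with hD
  set Ap : Set Ω := B ∩ {ω | 0 < g ω} with hAp
  set Am : Set Ω := B ∩ {ω | g ω < 0} with hAm
  have hApm : MeasurableSet[hτ0.measurableSpace] Ap := hB.inter (hg measurableSet_Ioi)
  have hAmm : MeasurableSet[hτ0.measurableSpace] Am := hB.inter (hg measurableSet_Iio)
  have c1 : ∀ᵐ ω ∂μ, 0 ≤ Ap.indicator D ω := by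
    filter_upwards [hpos] with ω hω
    by_cases hmem : ω ∈ Ap
    · rw [Set.indicator_of_mem hmem]
      have h1 : 0 ≤ g ω * D ω := hω hmem.1
      have h2 : 0 < g ω := hmem.2
      nlinarith
    · rw [Set.indicator_of_notMem hmem]
  have c2 : ∀ᵐ ω ∂μ, Am.indicator D ω ≤ 0 := by
    filter_upwards [hpos] with ω hω
    by_cases hmem : ω ∈ Am
    · rw [Set.indicator_of_mem hmem]
      have h1 : 0 ≤ g ω * D ω := hω hmem.1
      have h2 : g ω < 0 := hmem.2
      nlinarith
    · rw [Set.indicator_of_notMem hmem]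
  have hcover : {ω | ω ∈ B ∧ 0 < g ω * D ω} ⊆
      (Ap ∩ {ω | 0 < D ω}) ∪ (Am ∩ {ω | D ω < 0}) := by
    intro ω hω
    obtain ⟨hωB, hωpos⟩ := hω
    rcases lt_trichotomy (g ω) 0 with hg0 | hg0 | hg0
    · right; exact ⟨⟨hωB, hg0⟩, show D ω < 0 by nlinarith⟩
    · exfalso; rw [hg0, zero_mul] at hωpos; exact lt_irrefl _ hωpos
    · left; exact ⟨⟨hωB, hg0⟩, show 0 < D ω by nlinarith⟩
  have hsum : 0 < μ (Ap ∩ {ω | 0 < D ω}) ∨ 0 < μ (Am ∩ {ω | D ω < 0}) := by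
    by_contra hcon
    push_neg at hcon
    obtain ⟨hc1, hc2⟩ := hcon
    have hc1' : μ (Ap ∩ {ω | 0 < D ω}) = 0 := le_antisymm hc1 zero_le
    have hc2' : μ (Am ∩ {ω | D ω < 0}) = 0 := le_antisymm hc2 zero_le
    have hle : μ {ω | ω ∈ B ∧ 0 < g ω * D ω} ≤
        μ (Ap ∩ {ω | 0 < D ω}) + μ (Am ∩ {ω | D ω < 0}) :=
      (measure_mono hcover).trans (measure_union_le _ _)
    rw [hc1', hc2', add_zero] at hle
    exact absurd (le_antisymm hle zero_le) (ne_of_gt hstrict)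
  rcases hsum with hμ | hμ
  · refine (cond h hh τ0 τ1 hτ0 hτ1 hb0 hb1 hspace Ap hApm).1 ⟨c1, ?_⟩
    refine lt_of_lt_of_le hμ (measure_mono ?_)
    intro ω hω
    have : Ap.indicator D ω = D ω := Set.indicator_of_mem hω.1 D
    simp only [Set.mem_setOf_eq, this]
    exact (show 0 < Ap.indicator D ω by rw [this]; exact hω.2)
  · refine (cond h hh τ0 τ1 hτ0 hτ1 hb0 hb1 hspace Am hAmm).2 ⟨c2, ?_⟩
    refine lt_of_lt_of_le hμ (measure_mono ?_)
    intro ω hω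
    have : Am.indicator D ω = D ω := Set.indicator_of_mem hω.1 D
    simp only [Set.mem_setOf_eq, this]
    exact (show Am.indicator D ω < 0 by rw [this]; exact hω.2)

/-- **Lemma 1.** A càdlàg adapted process `X` has no arbitrage in the Cheridito class
`Π(𝔽)` iff for every `h > 0`, every pair of bounded stopping times `τ₀, τ₁` with
`τ₁ ≥ τ₀ + h` and every `A ∈ F_{τ₀}`, `1_A (X_{τ₁} - X_{τ₀}) ∈ L⁰_{+-}`. -/
theorem stmt0 (μ : MeasureTheory.Measure Ω) [MeasureTheory.IsProbabilityMeasure μ]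
    (ℱ : MeasureTheory.Filtration ℝ≥0 m0)
    (X : ℝ≥0 → Ω → ℝ) (hadapted : MeasureTheory.Adapted ℱ X) (hcadlag : IsCadlag X) :
    NoArbitrageCC μ ℱ X ↔
      ∀ (h : ℝ≥0), 0 < h →
        ∀ (τ0 τ1 : Ω → ℝ≥0)
          (hτ0 : MeasureTheory.IsStoppingTime ℱ (fun ω => (τ0 ω : WithTop ℝ≥0)))
          (_hτ1 : MeasureTheory.IsStoppingTime ℱ (fun ω => (τ1 ω : WithTop ℝ≥0))),
          (∃ T : ℝ≥0, ∀ ω, τ0 ω ≤ T) → (∃ T : ℝ≥0, ∀ ω, τ1 ω ≤ T) →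
          (∀ ω, τ0 ω + h ≤ τ1 ω) →
          ∀ A : Set Ω, MeasurableSet[hτ0.measurableSpace] A →
            MemLzeroPM μ (A.indicator fun ω => X (τ1 ω) ω - X (τ0 ω) ω) := by
  constructor
  · -- no arbitrage implies the condition
    intro hNA h hh τ0 τ1 hτ0 hτ1 hb0 hb1 hsp A hA
    set D : Ω → ℝ := fun ω => X (τ1 ω) ω - X (τ0 ω) ω with hD
    by_contra hcon
    rw [MemLzeroPM, not_and_or, not_not, not_not] at hcon
    -- build a one-step strategy with coefficient c on A
    have build : ∀ c : ℝ, ∃ H : SimpleStrategy ℱ, H.Spaced h ∧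
        ∀ ω, H.gains X ω = c * A.indicator D ω := by
      intro c
      refine ⟨⟨2, le_rfl, 0, fun j => if j ≤ 1 then τ0 else τ1,
        fun j => if j = 1 then A.indicator (fun _ => c) else fun _ => 0,
        ?_, ?_, ?_, ?_⟩, ?_, ?_⟩
      · intro j h1 h2
        by_cases hj : j ≤ 1
        · simpa only [if_pos hj] using hτ0
        · simpa only [if_neg hj] using hτ1
      · intro j h1 h2 ω
        interval_cases j
        show τ0 ω ≤ τ1 ω
        exact le_trans le_self_add (hsp ω)
      · obtain ⟨T, hT⟩ := hb1
        exact ⟨T, fun ω => hT ω⟩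
      · intro j h1 h2
        interval_cases j
        exact measurable_const.indicator hA
      · intro j h1 h2 ω
        interval_cases j
        show τ0 ω + h ≤ τ1 ω
        exact hsp ω
      · intro ω
        show ∑ j ∈ Finset.Ico 1 2, _ = _
        rw [show Finset.Ico 1 2 = {1} by rfl, Finset.sum_singleton]
        show A.indicator (fun _ => c) ω * (X (τ1 ω) ω - X (τ0 ω) ω) = c * A.indicator D ω
        by_cases hmem : ω ∈ A
        · rw [Set.indicator_of_mem hmem, Set.indicator_of_mem hmem]
        · rw [Set.indicator_of_notMem hmem, Set.indicator_of_notMem hmem, zero_mul, mul_zero]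
    rcases hcon with hP | hQ
    · obtain ⟨H, hHsp, hHg⟩ := build 1
      refine hNA ⟨h, H, hh, hHsp, ?_, ?_⟩
      · filter_upwards [hP.1] with ω h0
        rw [hHg ω, one_mul]; exact h0
      · have : {ω | 0 < H.gains X ω} = {ω | 0 < A.indicator D ω} := by
          ext ω; rw [Set.mem_setOf_eq, Set.mem_setOf_eq, hHg ω, one_mul]
        rw [this]; exact hP.2
    · obtain ⟨H, hHsp, hHg⟩ := build (-1)
      refine hNA ⟨h, H, hh, hHsp, ?_, ?_⟩
      · filter_upwards [hQ.1] with ω h0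
        rw [hHg ω]; linarith
      · have : {ω | 0 < H.gains X ω} = {ω | A.indicator D ω < 0} := by
          ext ω; rw [Set.mem_setOf_eq, Set.mem_setOf_eq, hHg ω]; constructor <;> intro <;> linarith
        rw [this]; exact hQ.2
  · -- the condition implies no arbitrage
    intro cond
    rintro ⟨h, H, hh, hsp, harb⟩
    have progX : MeasureTheory.ProgMeasurable ℱ X := progMeasurable_of_cadlag hadapted hcadlag
    have key : ∀ n : ℕ, ∀ H : SimpleStrategy ℱ, H.n = n → H.Spaced h →
        ¬ IsArbitrage μ X H := by
      intro n
      induction n using Nat.strong_induction_on with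
      | _ n IH =>
      intro H hn hsp harb
      have h2n : 2 ≤ H.n := H.two_le
      obtain ⟨T, hT⟩ := H.bounded
      set k := H.n - 1 with hkdef
      have hk1 : 1 ≤ k := by omega
      have hkn : k < H.n := by omega
      have hksucc : k + 1 = H.n := by omega
      -- monotonicity of stopping times along indices
      have htau' : ∀ j' j : ℕ, 1 ≤ j → j ≤ j' → j' ≤ H.n → ∀ ω, H.τ j ω ≤ H.τ j' ω := by
        intro j'
        induction j' with
        | zero => intro j hj hjj' _ ω; exact absurd hjj' (by omega)
        | succ m IHm =>
          intro j hj hjj' hm ω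
          rcases Nat.eq_or_lt_of_le hjj' with heq | hlt
          · rw [heq]
          · have hjm : j ≤ m := by omega
            have h1m : 1 ≤ m := by omega
            exact le_trans (IHm j hj hjm (by omega) ω) (H.mono m h1m (by omega) ω)
      have htau : ∀ j j' : ℕ, 1 ≤ j → j ≤ j' → j' ≤ H.n → ∀ ω, H.τ j ω ≤ H.τ j' ω :=
        fun j j' hj hjj' hn' ω => htau' j' j hj hjj' hn' ω
      set D : Ω → ℝ := fun ω => X (H.τ (k + 1) ω) ω - X (H.τ k ω) ω with hD
      set G' : Ω → ℝ := fun ω =>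
        ∑ j ∈ Finset.Ico 1 k, H.g j ω * (X (H.τ (j + 1) ω) ω - X (H.τ j ω) ω) with hG'
      have hsplit : ∀ ω, H.gains X ω = G' ω + H.g k ω * D ω := by
        intro ω
        rw [SimpleStrategy.gains, show H.n = k + 1 from hksucc.symm,
          Finset.sum_Ico_succ_top hk1]
      have hτk : MeasureTheory.IsStoppingTime ℱ (fun ω => (H.τ k ω : WithTop ℝ≥0)) := H.stopping k hk1 hkn.le
      have hτn : MeasureTheory.IsStoppingTime ℱ (fun ω => (H.τ (k + 1) ω : WithTop ℝ≥0)) :=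
        H.stopping (k + 1) (by omega) (by omega)
      have hbk : ∃ T : ℝ≥0, ∀ ω, H.τ k ω ≤ T :=
        ⟨T, fun ω => (htau k H.n hk1 hkn.le le_rfl ω).trans (hT ω)⟩
      have hbn : ∃ T : ℝ≥0, ∀ ω, H.τ (k + 1) ω ≤ T :=
        ⟨T, fun ω => (htau (k + 1) H.n (by omega) (by omega) le_rfl ω).trans (hT ω)⟩
      have hspk : ∀ ω, H.τ k ω + h ≤ H.τ (k + 1) ω := hsp k hk1 hkn
      have hgk : Measurable[hτk.measurableSpace] (H.g k) := H.g_meas k hk1 hkn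
      by_cases hcase : ∀ᵐ ω ∂μ, 0 ≤ G' ω
      · by_cases hcase2 : 0 < μ {ω | 0 < G' ω}
        · -- truncated strategy is an arbitrage; use the induction hypothesis
          by_cases hn2 : H.n = 2
          · have hkone : k = 1 := by omega
            have : G' = fun _ => (0 : ℝ) := by
              funext ω
              rw [hG']
              simp [hkone]
            rw [this] at hcase2
            simp at hcase2
          · have h3n : 3 ≤ H.n := by omega
            let H' : SimpleStrategy ℱ :=
              ⟨k, by omega, H.g0, H.τ, H.g,
                fun j h1 h2 => H.stopping j h1 (h2.trans hkn.le),
                fun j h1 h2 ω => H.mono j h1 (h2.trans hkn) ω,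
                ⟨T, fun ω => (htau k H.n hk1 hkn.le le_rfl ω).trans (hT ω)⟩,
                fun j h1 h2 => H.g_meas j h1 (h2.trans hkn)⟩
            have hH'g : ∀ ω, H'.gains X ω = G' ω := fun ω => rfl
            have hH'sp : H'.Spaced h := fun j h1 h2 ω => hsp j h1 (h2.trans hkn) ω
            refine IH k (by omega) H' rfl hH'sp ⟨?_, ?_⟩
            · filter_upwards [hcase] with ω h0
              rw [hH'g ω]; exact h0
            · have : {ω | 0 < H'.gains X ω} = {ω | 0 < G' ω} := by
                ext ω; rw [Set.mem_setOf_eq, Set.mem_setOf_eq, hH'g ω]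
              rw [this]; exact hcase2
        · -- G' vanishes a.e.; the last step is a one-step arbitrage on all of Ω
          have hzero2 : μ {ω | 0 < G' ω} = 0 :=
            le_antisymm (le_of_not_gt hcase2) zero_le
          have hle : ∀ᵐ ω ∂μ, G' ω ≤ 0 := by
            rw [ae_iff]
            simpa only [not_le] using hzero2
          have hzero : ∀ᵐ ω ∂μ, G' ω = 0 := by
            filter_upwards [hcase, hle] with ω h1 h2
            exact le_antisymm h2 h1
          have hμne : μ {ω | G' ω ≠ 0} = 0 := by
            rw [ae_iff] at hzero
            simpa using hzero
          refine one_step_contra cond hh hτk hτn hbk hbn hspk hgk MeasurableSet.univ ?_ ?_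
          · filter_upwards [harb.1, hzero] with ω h1 h2 _
            rw [hsplit ω, h2, zero_add] at h1
            exact h1
          · refine meas_pos_of_subset_union (N := {ω | G' ω ≠ 0}) ?_ hμne harb.2
            intro ω hω
            rw [Set.mem_setOf_eq] at hω
            by_cases hωz : G' ω = 0
            · left
              refine ⟨Set.mem_univ ω, ?_⟩
              rw [hsplit ω, hωz, zero_add] at hω
              exact hω
            · right; exact hωz
      · -- G' is negative with positive probability
        -- G' is measurable with respect to F_{τ_k}
        have hG'meas : Measurable[hτk.measurableSpace] G' := by
          rw [hG']
          refine Finset.measurable_sum (Finset.Ico 1 k) fun j hj => ?_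
          rw [Finset.mem_Ico] at hj
          obtain ⟨hj1, hjk⟩ := hj
          have hτj : MeasureTheory.IsStoppingTime ℱ (fun ω => (H.τ j ω : WithTop ℝ≥0)) :=
            H.stopping j hj1 (by omega)
          have hτj1 : MeasureTheory.IsStoppingTime ℱ (fun ω => (H.τ (j + 1) ω : WithTop ℝ≥0)) :=
            H.stopping (j + 1) (by omega) (by omega)
          have hmg : Measurable[hτk.measurableSpace] (H.g j) :=
            (H.g_meas j hj1 (by omega)).mono
              (MeasureTheory.IsStoppingTime.measurableSpace_mono _ hτk
                (fun ω => WithTop.coe_le_coe.mpr (htau j k hj1 hjk.le hkn.le ω))) le_rfl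
          have hmX : ∀ l : ℕ, 1 ≤ l → l ≤ k →
              Measurable[hτk.measurableSpace] (fun ω => X (H.τ l ω) ω) := by
            intro l hl1 hlk
            have hstop : MeasureTheory.IsStoppingTime ℱ (fun ω => (H.τ l ω : WithTop ℝ≥0)) :=
              H.stopping l hl1 (by omega)
            have := MeasureTheory.measurable_stoppedValue progX hstop
            exact this.mono (MeasureTheory.IsStoppingTime.measurableSpace_mono _ hτk
              (fun ω => WithTop.coe_le_coe.mpr (htau l k hl1 hlk hkn.le ω))) le_rfl
          exact hmg.mul ((hmX (j + 1) (by omega) (by omega)).sub (hmX j hj1 hjk.le))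
        have hBpos : 0 < μ {ω | G' ω < 0} := by
          rw [ae_iff] at hcase
          rw [zero_lt_iff]
          intro hzero
          apply hcase
          simpa only [not_le] using hzero
        have hBmeas : MeasurableSet[hτk.measurableSpace] {ω | G' ω < 0} :=
          hG'meas measurableSet_Iio
        have hgains0 : μ {ω | ¬ 0 ≤ H.gains X ω} = 0 := by
          rw [← ae_iff]; exact harb.1
        refine one_step_contra cond hh hτk hτn hbk hbn hspk hgk hBmeas ?_ ?_
        · filter_upwards [harb.1] with ω h1 h2
          have h2' : G' ω < 0 := h2
          rw [hsplit ω] at h1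
          show 0 ≤ H.g k ω * D ω
          linarith
        · refine meas_pos_of_subset_union (N := {ω | ¬ 0 ≤ H.gains X ω}) ?_ hgains0 hBpos
          intro ω hω
          rw [Set.mem_setOf_eq] at hω
          by_cases hg0 : 0 ≤ H.gains X ω
          · left
            refine ⟨hω, ?_⟩
            rw [hsplit ω] at hg0
            show 0 < H.g k ω * D ω
            linarith
          · right; exact hg0
    exact key H.n H rfl hsp harb
end

section
/- Let S = (S_t)_{t≥0} be a càdlàg process adapted to 𝔽 and let f be a strictly increasing or strictly decreasing real-valued function defined on a subset of ℝ containing the range of S. Then for every probability measure Q equivalent to P, the process S has no arbitrage in the Cheridito class Π(𝔽) under Q if and only if the process Y_t = f(S_t) has no arbitrage in Π(𝔽) under Q. -/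
open MeasureTheory ProbabilityTheory Filter Set
open scoped NNReal ENNReal

variable {Ω : Type*} {m0 : MeasurableSpace Ω}

lemma progMeasurable_of_rightContinuous {ℱ : Filtration ℝ≥0 m0} {X : ℝ≥0 → Ω → ℝ}
    (hadapt : Adapted ℱ X)
    (hrc : ∀ ω (t : ℝ≥0), ContinuousWithinAt (fun s => X s ω) (Set.Ici t) t) :
    ProgMeasurable ℱ X := by
  intro i
  rw [stronglyMeasurable_iff_measurable]
  set mP : MeasurableSpace (Set.Iic i × Ω) := Subtype.instMeasurableSpace.prod (ℱ i) with hmP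
  set gn : ℕ → ℝ≥0 → ℝ≥0 := fun n s => min i ((⌈s * 2 ^ n⌉₊ : ℝ≥0) / 2 ^ n) with hgn
  have h2n : ∀ n : ℕ, (0 : ℝ≥0) < 2 ^ n := fun n => pow_pos two_pos n
  have hsg : ∀ (n : ℕ) (s : ℝ≥0), s ≤ i → s ≤ gn n s := by
    intro n s hs
    refine le_min hs ?_
    rw [le_div_iff₀ (h2n n)]
    exact Nat.le_ceil _
  have hgle : ∀ (n : ℕ) (s : ℝ≥0), gn n s ≤ s + ((2 : ℝ≥0) ^ n)⁻¹ := by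
    intro n s
    refine (min_le_right _ _).trans ?_
    rw [div_le_iff₀ (h2n n), add_mul, inv_mul_cancel₀ (h2n n).ne']
    exact (Nat.ceil_lt_add_one (by positivity)).le
  have hmeas : ∀ n : ℕ, Measurable[mP] (fun p : Set.Iic i × Ω => X (gn n p.1) p.2) := by
    intro n
    have mfst : Measurable[mP] (fun p : Set.Iic i × Ω => (p.1 : ℝ≥0)) :=
      measurable_subtype_coe.comp (@measurable_fst _ _ _ (ℱ i))
    have msnd : @Measurable _ _ mP (ℱ i) Prod.snd := @measurable_snd _ _ _ (ℱ i)
    have mk : Measurable[mP] (fun p : Set.Iic i × Ω => ⌈(p.1 : ℝ≥0) * 2 ^ n⌉₊) :=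
      Nat.measurable_ceil.comp (mfst.mul measurable_const)
    have hXc : ∀ c : ℝ≥0, @Measurable Ω ℝ (ℱ i) _ (X (min i c)) := fun c =>
      (hadapt (min i c)).mono (ℱ.mono (min_le_left _ _)) le_rfl
    have hcomp : (fun p : Set.Iic i × Ω => X (gn n p.1) p.2)
        = (fun q : (Set.Iic i × Ω) × ℕ => X (min i ((q.2 : ℝ≥0) / 2 ^ n)) q.1.2) ∘
          (fun p : Set.Iic i × Ω => (p, ⌈(p.1 : ℝ≥0) * 2 ^ n⌉₊)) := rfl
    rw [hcomp]
    have h1 : @Measurable _ _ (@Prod.instMeasurableSpace _ _ mP _) _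
        (fun q : (Set.Iic i × Ω) × ℕ => X (min i ((q.2 : ℝ≥0) / 2 ^ n)) q.1.2) := by
      refine @measurable_from_prod_countable_left _ _ _ mP _ _ _ _ _ (fun k => ?_)
      have msnd : @Measurable _ _ mP (ℱ i) Prod.snd := @measurable_snd _ _ _ (ℱ i)
      exact Measurable.comp (hXc ((k : ℝ≥0) / 2 ^ n)) msnd
    exact h1.comp ((@measurable_id _ mP).prodMk mk)
  refine @measurable_of_tendsto_metrizable (Set.Iic i × Ω) ℝ mP _ _ _ _
    (fun n p => X (gn n p.1) p.2) _ hmeas ?_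
  rw [tendsto_pi_nhds]
  rintro ⟨⟨s, hs⟩, ω⟩
  have htime : Tendsto (fun n => gn n s) atTop (nhdsWithin s (Set.Ici s)) := by
    rw [tendsto_nhdsWithin_iff]
    constructor
    · have hupper : Tendsto (fun n : ℕ => s + ((2 : ℝ≥0) ^ n)⁻¹) atTop (nhds (s + 0)) := by
        refine tendsto_const_nhds.add ?_
        have : ∀ n : ℕ, ((2 : ℝ≥0) ^ n)⁻¹ = (2⁻¹ : ℝ≥0) ^ n := fun n => by
          rw [inv_pow]
        simp only [this]
        exact NNReal.tendsto_pow_atTop_nhds_zero_of_lt_one (by rw [← NNReal.coe_lt_coe]; norm_num)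
      rw [add_zero] at hupper
      exact tendsto_of_tendsto_of_tendsto_of_le_of_le tendsto_const_nhds hupper
        (fun n => hsg n s hs) (fun n => hgle n s)
    · exact Filter.Eventually.of_forall fun n => hsg n s hs
  exact (hrc ω s).tendsto.comp htime




section Helpers

variable {ℱ : MeasureTheory.Filtration ℝ≥0 m0}

/-- chain monotonicity of the stopping times of a simple strategy. -/
lemma SimpleStrategy.tau_le (H : SimpleStrategy ℱ) {i j : ℕ} (h1 : 1 ≤ i) (hij : i ≤ j)
    (hj : j ≤ H.n) (ω : Ω) : H.τ i ω ≤ H.τ j ω := by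
  induction j, hij using Nat.le_induction with
  | base => exact le_rfl
  | succ j hij ih =>
      exact (ih (by omega)).trans (H.mono j (by omega) (by omega) ω)

/-- the negated strategy. -/
def SimpleStrategy.neg (H : SimpleStrategy ℱ) : SimpleStrategy ℱ :=
  ⟨H.n, H.two_le, -H.g0, H.τ, fun j ω => -H.g j ω, H.stopping, H.mono, H.bounded,
    fun j h1 h2 => (H.g_meas j h1 h2).neg⟩

lemma SimpleStrategy.gains_neg (H : SimpleStrategy ℱ) (X : ℝ≥0 → Ω → ℝ) (ω : Ω) :
    H.neg.gains X ω = -(H.gains X ω) := by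
  simp only [SimpleStrategy.gains, SimpleStrategy.neg, ← Finset.sum_neg_distrib]
  exact Finset.sum_congr rfl fun j _ => by ring

lemma SimpleStrategy.gains_negProc (H : SimpleStrategy ℱ) (X : ℝ≥0 → Ω → ℝ) (ω : Ω) :
    H.gains (fun t ω => -X t ω) ω = -(H.gains X ω) := by
  simp only [SimpleStrategy.gains, ← Finset.sum_neg_distrib]
  exact Finset.sum_congr rfl fun j _ => by ring

lemma SimpleStrategy.spaced_neg (H : SimpleStrategy ℱ) {h : ℝ≥0} :
    H.neg.Spaced h ↔ H.Spaced h := Iff.rfl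

/-- no arbitrage for `X` iff no arbitrage for `-X`. -/
lemma noArbitrageCC_neg_iff (μ : MeasureTheory.Measure Ω) (X : ℝ≥0 → Ω → ℝ) :
    NoArbitrageCC μ ℱ X ↔ NoArbitrageCC μ ℱ (fun t ω => -X t ω) := by
  have key : ∀ (Y : ℝ≥0 → Ω → ℝ) (H : SimpleStrategy ℱ),
      IsArbitrage μ (fun t ω => -Y t ω) H → IsArbitrage μ Y H.neg := by
    intro Y H hH
    have hg : ∀ ω, H.neg.gains Y ω = H.gains (fun t ω => -Y t ω) ω := by
      intro ω; rw [SimpleStrategy.gains_neg, SimpleStrategy.gains_negProc]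
    constructor
    · filter_upwards [hH.1] with ω hω; rw [hg ω]; exact hω
    · have : {ω | 0 < H.neg.gains Y ω} = {ω | 0 < H.gains (fun t ω => -Y t ω) ω} := by
        ext ω; simp [hg ω]
      rw [this]; exact hH.2
  constructor
  · rintro hX ⟨h, H, hp, hs, ha⟩
    exact hX ⟨h, H.neg, hp, hs, key X H ha⟩
  · rintro hX ⟨h, H, hp, hs, ha⟩
    refine hX ⟨h, H.neg, hp, hs, key _ H ?_⟩
    have : (fun t ω => -(-X t ω)) = X := by funext t ω; ring
    constructor
    · filter_upwards [ha.1] with ω hω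
      rw [show (fun t ω => - -X t ω) = X from this]; exact hω
    · rw [show (fun t ω => - -X t ω) = X from this]; exact ha.2

end Helpers


/-- composing a measurable map into `D` with a function strictly monotone on `D` is measurable. -/
lemma measurable_comp_strictMonoOn {D : Set ℝ} {f : ℝ → ℝ} (hf : StrictMonoOn f D)
    {α : Type*} {m : MeasurableSpace α} {g : α → ℝ} (hg : Measurable[m] g)
    (hgD : ∀ a, g a ∈ D) : Measurable[m] fun a => f (g a) := by
  apply measurable_of_Iio
  intro c
  set L : Set ℝ := ⋃ y ∈ {y ∈ D | f y < c}, Set.Iic y with hL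
  have hLconn : L.OrdConnected := by
    constructor
    intro x hx y hy z hz
    simp only [hL, Set.mem_iUnion, Set.mem_sep_iff, Set.mem_Iic, exists_prop] at hy ⊢
    obtain ⟨w, hw1, hw2⟩ := hy
    exact ⟨w, hw1, hz.2.trans hw2⟩
  have hpre : (fun a => f (g a)) ⁻¹' Set.Iio c = g ⁻¹' L := by
    ext a
    simp only [Set.mem_preimage, Set.mem_Iio, hL, Set.mem_iUnion, Set.mem_sep_iff,
      Set.mem_Iic, exists_prop]
    constructor
    · intro h
      exact ⟨g a, ⟨hgD a, h⟩, le_rfl⟩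
    · rintro ⟨y, ⟨hyD, hyc⟩, hay⟩
      rcases eq_or_lt_of_le hay with h | h
      · rwa [h]
      · exact (hf (hgD a) hyD h).trans hyc
  rw [hpre]
  exact hg hLconn.measurableSet

section Core

variable {ℱ : MeasureTheory.Filtration ℝ≥0 m0}

/-- measurability of the partial gains up to the `m`-th stopping time. -/
lemma partial_gains_meas (H : SimpleStrategy ℱ) {X : ℝ≥0 → Ω → ℝ} (hX : ProgMeasurable ℱ X)
    {m : ℕ} (h1 : 1 ≤ m) (hm : m ≤ H.n) :
    Measurable[(H.stopping m h1 hm).measurableSpace]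
      (fun ω => ∑ j ∈ Finset.Ico 1 m, H.g j ω * (X (H.τ (j+1) ω) ω - X (H.τ j ω) ω)) := by
  apply Finset.measurable_sum
  intro j hj
  rw [Finset.mem_Ico] at hj
  obtain ⟨hj1, hjm⟩ := hj
  have hjn : j < H.n := lt_of_lt_of_le hjm hm
  have hsub : ∀ (i : ℕ) (hi1 : 1 ≤ i) (hin : i ≤ H.n), (∀ ω, H.τ i ω ≤ H.τ m ω) →
      Measurable[(H.stopping m h1 hm).measurableSpace] (fun ω => X (H.τ i ω) ω) := by
    intro i hi1 hin hile
    have hsv := measurable_stoppedValue (f := ℱ) hX (H.stopping i hi1 hin)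
    exact hsv.mono ((H.stopping i hi1 hin).measurableSpace_mono (H.stopping m h1 hm) (fun ω => WithTop.coe_le_coe.mpr (hile ω))) le_rfl
  have h1meas := hsub j hj1 hjn.le (fun ω => H.tau_le hj1 hjm.le hm ω)
  have h2meas := hsub (j+1) (by omega) (by omega) (fun ω => H.tau_le (by omega) hjm hm ω)
  have hg := (H.g_meas j hj1 hjn).mono
      ((H.stopping j hj1 hjn.le).measurableSpace_mono (H.stopping m h1 hm)
        (fun ω => WithTop.coe_le_coe.mpr (H.tau_le hj1 hjm.le hm ω))) le_rfl
  exact hg.mul (h2meas.sub h1meas)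

/-- every arbitrage in `S(𝔽)` contains a one-step arbitrage along a pair of its stopping
times. -/
lemma oneStep_reduction (μ : MeasureTheory.Measure Ω) {X : ℝ≥0 → Ω → ℝ}
    (hX : ProgMeasurable ℱ X) (H : SimpleStrategy ℱ) (harb : IsArbitrage μ X H) :
    ∃ k, ∃ (h1 : 1 ≤ k) (h2 : k < H.n), ∃ g' : Ω → ℝ,
      Measurable[(H.stopping k h1 h2.le).measurableSpace] g' ∧
      (∀ᵐ ω ∂μ, 0 ≤ g' ω * (X (H.τ (k+1) ω) ω - X (H.τ k ω) ω)) ∧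
      0 < μ {ω | 0 < g' ω * (X (H.τ (k+1) ω) ω - X (H.τ k ω) ω)} := by
  have key : ∀ m, 2 ≤ m → m ≤ H.n →
      (∀ᵐ ω ∂μ, 0 ≤ ∑ j ∈ Finset.Ico 1 m, H.g j ω * (X (H.τ (j+1) ω) ω - X (H.τ j ω) ω)) →
      0 < μ {ω | 0 < ∑ j ∈ Finset.Ico 1 m, H.g j ω * (X (H.τ (j+1) ω) ω - X (H.τ j ω) ω)} →
      ∃ k, ∃ (h1 : 1 ≤ k) (h2 : k < H.n), ∃ g' : Ω → ℝ,
        Measurable[(H.stopping k h1 h2.le).measurableSpace] g' ∧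
        (∀ᵐ ω ∂μ, 0 ≤ g' ω * (X (H.τ (k+1) ω) ω - X (H.τ k ω) ω)) ∧
        0 < μ {ω | 0 < g' ω * (X (H.τ (k+1) ω) ω - X (H.τ k ω) ω)} := by
    intro m hm
    induction m, hm using Nat.le_induction with
    | base =>
        intro h2n hae hpos
        have hIco : Finset.Ico 1 2 = {1} := rfl
        refine ⟨1, le_rfl, by omega, H.g 1, H.g_meas 1 le_rfl (by omega), ?_, ?_⟩
        · filter_upwards [hae] with ω hω
          simpa [hIco] using hω
        · refine lt_of_lt_of_le hpos (le_of_eq ?_)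
          congr 1
          ext ω
          simp [hIco]
    | succ m hm2 ih =>
        intro hmn hae hpos
        have hm1 : 1 ≤ m := by omega
        have hmn' : m ≤ H.n := by omega
        set G : Ω → ℝ :=
          fun ω => ∑ j ∈ Finset.Ico 1 m, H.g j ω * (X (H.τ (j+1) ω) ω - X (H.τ j ω) ω) with hG
        set Δ : Ω → ℝ := fun ω => X (H.τ (m+1) ω) ω - X (H.τ m ω) ω with hΔ
        have hsplit : ∀ ω, ∑ j ∈ Finset.Ico 1 (m+1),
            H.g j ω * (X (H.τ (j+1) ω) ω - X (H.τ j ω) ω) = G ω + H.g m ω * Δ ω := by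
          intro ω
          rw [Finset.sum_Ico_succ_top hm1]
        have hGmeas : Measurable[(H.stopping m hm1 hmn').measurableSpace] G :=
          partial_gains_meas H hX hm1 hmn'
        set B : Set Ω := {ω | G ω < 0} with hB
        have hBmeas : MeasurableSet[(H.stopping m hm1 hmn').measurableSpace] B :=
          hGmeas measurableSet_Iio
        by_cases hBpos : 0 < μ B
        · refine ⟨m, hm1, by omega, B.indicator (H.g m),
            (H.g_meas m hm1 (by omega)).indicator hBmeas, ?_, ?_⟩
          · filter_upwards [hae] with ω hω
            rw [hsplit ω] at hω
            by_cases hωB : ω ∈ B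
            · rw [Set.indicator_of_mem hωB]
              have hlt : G ω < 0 := hωB
              show 0 ≤ H.g m ω * Δ ω
              nlinarith
            · rw [Set.indicator_of_notMem hωB]
              simp
          · have hsubset : B ∩ {ω | 0 ≤ G ω + H.g m ω * Δ ω} ⊆
                {ω | 0 < B.indicator (H.g m) ω * Δ ω} := by
              rintro ω ⟨h1ω, h2ω⟩
              rw [Set.mem_setOf_eq, Set.indicator_of_mem h1ω]
              have hlt : G ω < 0 := h1ω
              have h0 : (0:ℝ) ≤ G ω + H.g m ω * Δ ω := h2ω
              nlinarith
            have hnull : μ {ω | ¬ 0 ≤ G ω + H.g m ω * Δ ω} = 0 := by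
              have := ae_iff.mp hae
              convert this using 3
              ext ω
              rw [hsplit ω]
            have hcover : B ⊆ (B ∩ {ω | 0 ≤ G ω + H.g m ω * Δ ω}) ∪
                {ω | ¬ 0 ≤ G ω + H.g m ω * Δ ω} := by
              intro ω hω
              by_cases h : 0 ≤ G ω + H.g m ω * Δ ω
              · exact Or.inl ⟨hω, h⟩
              · exact Or.inr h
            have hle : μ B ≤ μ (B ∩ {ω | 0 ≤ G ω + H.g m ω * Δ ω}) := by
              calc μ B ≤ μ ((B ∩ {ω | 0 ≤ G ω + H.g m ω * Δ ω}) ∪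
                  {ω | ¬ 0 ≤ G ω + H.g m ω * Δ ω}) := measure_mono hcover
                _ ≤ μ (B ∩ {ω | 0 ≤ G ω + H.g m ω * Δ ω}) +
                    μ {ω | ¬ 0 ≤ G ω + H.g m ω * Δ ω} := measure_union_le _ _
                _ = μ (B ∩ {ω | 0 ≤ G ω + H.g m ω * Δ ω}) := by rw [hnull, add_zero]
            exact lt_of_lt_of_le (lt_of_lt_of_le hBpos hle) (measure_mono hsubset)
        · have hB0 : μ B = 0 := by
            by_contra h
            exact hBpos (pos_iff_ne_zero.mpr h)
          have haeGm : ∀ᵐ ω ∂μ, 0 ≤ G ω := by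
            rw [ae_iff]
            convert hB0 using 2
            ext ω
            simp [hB, not_le]
          by_cases hpos' : 0 < μ {ω | 0 < G ω}
          · exact ih hmn' haeGm hpos'
          · have h0 : μ {ω | 0 < G ω} = 0 := by
              by_contra h
              exact hpos' (pos_iff_ne_zero.mpr h)
            have haeG0 : ∀ᵐ ω ∂μ, G ω = 0 := by
              rw [ae_iff]
              refine measure_mono_null ?_ (measure_union_null hB0 h0)
              intro ω hω
              rcases lt_or_gt_of_ne (Ne.symm hω) with h | h
              · exact Or.inr h
              · exact Or.inl h
            refine ⟨m, hm1, by omega, H.g m, H.g_meas m hm1 (by omega), ?_, ?_⟩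
            · filter_upwards [hae, haeG0] with ω h1ω h2ω
              rw [hsplit ω, h2ω, zero_add] at h1ω
              exact h1ω
            · have hsets : {ω | 0 < H.g m ω * Δ ω} =ᵐ[μ] {ω | 0 < ∑ j ∈ Finset.Ico 1 (m+1),
                  H.g j ω * (X (H.τ (j+1) ω) ω - X (H.τ j ω) ω)} := by
                rw [Filter.eventuallyEq_set]
                filter_upwards [haeG0] with ω h0ω
                show 0 < H.g m ω * Δ ω ↔ _
                rw [hsplit ω, h0ω, zero_add]
              rw [measure_congr hsets]
              exact hpos
  exact key H.n H.two_le le_rfl harb.1 harb.2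

end Core

/-- transfer of one-step sign conditions between two processes whose increments have the
same signs. -/
lemma sign_transfer {a b c d r : ℝ} (h1 : a < b ↔ c < d) (h2 : b < a ↔ d < c) :
    (0 ≤ r * (b - a) → 0 ≤ r * (d - c)) ∧ (0 < r * (b - a) → 0 < r * (d - c)) := by
  rcases lt_trichotomy a b with hab | hab | hab
  · have hba : 0 < b - a := by linarith
    have hdc : 0 < d - c := by linarith [h1.mp hab]
    constructor
    · intro hr
      have hr0 : 0 ≤ r := by
        by_contra h'
        push_neg at h'
        nlinarith
      exact mul_nonneg hr0 hdc.le
    · intro hr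
      have hr0 : 0 < r := by
        by_contra h'
        push_neg at h'
        nlinarith
      exact mul_pos hr0 hdc
  · have hcd : c = d := by
      have hc : ¬ c < d := fun hc => absurd (h1.mpr hc) (by simp [hab])
      have hd : ¬ d < c := fun hd => absurd (h2.mpr hd) (by simp [hab])
      linarith [not_lt.mp hc, not_lt.mp hd]
    constructor
    · intro _
      rw [hcd]
      simp
    · intro hr
      rw [hab] at hr
      simp at hr
  · have hba : b - a < 0 := by linarith
    have hdc : d - c < 0 := by linarith [h2.mp hab]
    constructor
    · intro hr
      have hr0 : r ≤ 0 := by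
        by_contra h'
        push_neg at h'
        nlinarith
      nlinarith [mul_nonneg (neg_nonneg.mpr hr0) (neg_nonneg.mpr hdc.le)]
    · intro hr
      have hr0 : r < 0 := by
        by_contra h'
        push_neg at h'
        nlinarith
      exact mul_pos_of_neg_of_neg hr0 hdc

section Transfer

variable {ℱ : MeasureTheory.Filtration ℝ≥0 m0}

/-- the two-step (one trading period) simple strategy. -/
def twoStep (ℱ : MeasureTheory.Filtration ℝ≥0 m0) (σ π : Ω → ℝ≥0)
    (hσ : MeasureTheory.IsStoppingTime ℱ (fun ω => (σ ω : WithTop ℝ≥0)))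
    (hπ : MeasureTheory.IsStoppingTime ℱ (fun ω => (π ω : WithTop ℝ≥0)))
    (hle : ∀ ω, σ ω ≤ π ω) (T : ℝ≥0) (hbd : ∀ ω, π ω ≤ T)
    (g' : Ω → ℝ) (hg' : Measurable[hσ.measurableSpace] g') : SimpleStrategy ℱ where
  n := 2
  two_le := le_rfl
  g0 := 0
  τ := fun j => if j ≤ 1 then σ else π
  g := fun j => if j = 1 then g' else fun _ => 0
  stopping := by
    intro j h1 h2
    interval_cases j
    · simpa using hσ
    · simpa using hπ
  mono := by
    intro j h1 h2 ω
    interval_cases j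
    simpa using hle ω
  bounded := ⟨T, fun ω => by simpa using hbd ω⟩
  g_meas := by
    intro j h1 h2
    interval_cases j
    simpa using hg'

/-- if the increments of `X` and `Y` always have the same signs, no arbitrage for `Y`
implies no arbitrage for `X` in the Cheridito class. -/
lemma transfer_noArb (μ : MeasureTheory.Measure Ω) {X Y : ℝ≥0 → Ω → ℝ}
    (hX : ProgMeasurable ℱ X)
    (hsign : ∀ (s t : ℝ≥0) (ω : Ω), X s ω < X t ω ↔ Y s ω < Y t ω) :
    NoArbitrageCC μ ℱ Y → NoArbitrageCC μ ℱ X := by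
  intro hY
  rintro ⟨h, H, hp, hsp, harb⟩
  obtain ⟨k, h1, h2, g', hmeas, hae, hpos⟩ := oneStep_reduction μ hX H harb
  have hk1 : 1 ≤ k + 1 := by omega
  have hk1n : k + 1 ≤ H.n := by omega
  obtain ⟨T, hT⟩ := H.bounded
  have hbd : ∀ ω, H.τ (k+1) ω ≤ T := fun ω => (H.tau_le hk1 hk1n le_rfl ω).trans (hT ω)
  set H' : SimpleStrategy ℱ := twoStep ℱ (H.τ k) (H.τ (k+1)) (H.stopping k h1 h2.le)
      (H.stopping (k+1) hk1 hk1n) (H.mono k h1 h2) T hbd g' hmeas with hH'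
  have hgains : ∀ ω, H'.gains Y ω = g' ω * (Y (H.τ (k+1) ω) ω - Y (H.τ k ω) ω) := by
    intro ω
    have hIco : Finset.Ico 1 2 = {1} := rfl
    simp [SimpleStrategy.gains, hH', twoStep, hIco]
  have hpt : ∀ ω, (0 ≤ g' ω * (X (H.τ (k+1) ω) ω - X (H.τ k ω) ω) →
        0 ≤ g' ω * (Y (H.τ (k+1) ω) ω - Y (H.τ k ω) ω)) ∧
      (0 < g' ω * (X (H.τ (k+1) ω) ω - X (H.τ k ω) ω) →
        0 < g' ω * (Y (H.τ (k+1) ω) ω - Y (H.τ k ω) ω)) := by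
    intro ω
    exact sign_transfer (hsign (H.τ k ω) (H.τ (k+1) ω) ω) (hsign (H.τ (k+1) ω) (H.τ k ω) ω)
  apply hY
  refine ⟨h, H', hp, ?_, ?_, ?_⟩
  · intro j hj1 hj2 ω
    have hj : j = 1 := by
      have : H'.n = 2 := rfl
      omega
    subst hj
    simpa [hH', twoStep] using hsp k h1 h2 ω
  · filter_upwards [hae] with ω hω
    rw [hgains ω]
    exact (hpt ω).1 hω
  · refine lt_of_lt_of_le hpos (measure_mono ?_)
    intro ω hω
    rw [Set.mem_setOf_eq, hgains ω]
    exact (hpt ω).2 hω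

/-- the monotone case of the main theorem. -/
lemma main_mono (ℱ : MeasureTheory.Filtration ℝ≥0 m0) (S : ℝ≥0 → Ω → ℝ)
    (hadapted : MeasureTheory.Adapted ℱ S)
    (hrc : ∀ ω (t : ℝ≥0), ContinuousWithinAt (fun s => S s ω) (Set.Ici t) t)
    (D : Set ℝ) (f : ℝ → ℝ) (hf : StrictMonoOn f D) (hrange : ∀ t ω, S t ω ∈ D)
    (Q : MeasureTheory.Measure Ω) :
    NoArbitrageCC Q ℱ S ↔ NoArbitrageCC Q ℱ (fun t ω => f (S t ω)) := by
  have hprogS : ProgMeasurable ℱ S := progMeasurable_of_rightContinuous hadapted hrc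
  have hprogY : ProgMeasurable ℱ (fun t ω => f (S t ω)) := by
    intro i
    rw [stronglyMeasurable_iff_measurable]
    have hm := (hprogS i).measurable
    exact measurable_comp_strictMonoOn hf hm (fun p => hrange _ _)
  have hsign : ∀ (s t : ℝ≥0) (ω : Ω), f (S s ω) < f (S t ω) ↔ S s ω < S t ω :=
    fun s t ω => hf.lt_iff_lt (hrange s ω) (hrange t ω)
  constructor
  · exact transfer_noArb Q hprogY hsign
  · exact transfer_noArb Q hprogS (fun s t ω => (hsign s t ω).symm)

end Transfer

/-- **Theorem 2.** For a càdlàg adapted process `S` and a strictly monotone function `f`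
defined on a set containing the range of `S`, no arbitrage of `S` in `Π(𝔽)` is
equivalent to no arbitrage of `f ∘ S` in `Π(𝔽)`, under any measure `Q` equivalent to `P`. -/
theorem stmt1 (P : MeasureTheory.Measure Ω) [MeasureTheory.IsProbabilityMeasure P]
    (ℱ : MeasureTheory.Filtration ℝ≥0 m0)
    (S : ℝ≥0 → Ω → ℝ) (hadapted : MeasureTheory.Adapted ℱ S) (hcadlag : IsCadlag S)
    (D : Set ℝ) (f : ℝ → ℝ) (hf : StrictMonoOn f D ∨ StrictAntiOn f D)
    (hrange : ∀ t ω, S t ω ∈ D)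
    (Q : MeasureTheory.Measure Ω) [MeasureTheory.IsProbabilityMeasure Q]
    (hQP : Q ≪ P) (hPQ : P ≪ Q) :
    NoArbitrageCC Q ℱ S ↔ NoArbitrageCC Q ℱ (fun t ω => f (S t ω)) := by
  have hrc : ∀ ω (t : ℝ≥0), ContinuousWithinAt (fun s => S s ω) (Set.Ici t) t :=
    fun ω t => (hcadlag ω).1 t
  rcases hf with hmono | hanti
  · exact main_mono ℱ S hadapted hrc D f hmono hrange Q
  · have hmono' : StrictMonoOn (fun x => -f x) D :=
      fun a ha b hb hab => neg_lt_neg (hanti ha hb hab)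
    have h1 := main_mono ℱ S hadapted hrc D (fun x => -f x) hmono' hrange Q
    have h2 := noArbitrageCC_neg_iff Q (fun t ω => f (S t ω))
      (ℱ := ℱ)
    exact h1.trans h2.symm
end

section
/- Let X = (X_t)_{t≥0} be a continuous process adapted to 𝔽. Suppose that for every bounded 𝔽-stopping time τ, every A ∈ F_τ with P(A) > 0, every 0 < δ < T < ∞, and every C > 0, one has P(A ∩ {sup_{t∈[δ,T]} (X_{τ+t} − X_τ) < −C}) > 0 and P(A ∩ {inf_{t∈[δ,T]} (X_{τ+t} − X_τ) > C}) > 0. Then for every bounded 𝔽-adapted process V, the process Y = X + V has no arbitrage in the Cheridito class Π(𝔽). -/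
open MeasureTheory ProbabilityTheory Filter Set
open scoped NNReal ENNReal

variable {Ω : Type*} {m0 : MeasurableSpace Ω}

/-- **Lemma 4.** If, after every bounded stopping time `τ` and on every positive-probability
event `A ∈ F_τ`, the increments `X_{τ+t} - X_τ` for `t ∈ [δ, T]` go uniformly below `-C`
and uniformly above `C` with positive probability, then `Y = X + V` has no arbitrage in
`Π(𝔽)` for every bounded adapted process `V`. -/
theorem stmt8 (μ : MeasureTheory.Measure Ω) [MeasureTheory.IsProbabilityMeasure μ]
    (ℱ : MeasureTheory.Filtration ℝ≥0 m0)
    (X : ℝ≥0 → Ω → ℝ) (hadapted : MeasureTheory.Adapted ℱ X)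
    (hcont : ∀ ω, Continuous fun t => X t ω)
    (hyp : ∀ (τ : Ω → ℝ≥0) (hτ : MeasureTheory.IsStoppingTime ℱ (fun ω => (τ ω : WithTop ℝ≥0))),
      (∃ T : ℝ≥0, ∀ ω, τ ω ≤ T) →
      ∀ A : Set Ω, MeasurableSet[hτ.measurableSpace] A → 0 < μ A →
      ∀ δ T : ℝ≥0, 0 < δ → δ < T → ∀ C : ℝ, 0 < C →
        0 < μ (A ∩ {ω | sSup ((fun t => X (τ ω + t) ω - X (τ ω) ω) '' Set.Icc δ T) < -C}) ∧
        0 < μ (A ∩ {ω | C < sInf ((fun t => X (τ ω + t) ω - X (τ ω) ω) '' Set.Icc δ T)}))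
    (V : ℝ≥0 → Ω → ℝ) (hVadapted : MeasureTheory.Adapted ℱ V)
    (hVbdd : ∃ K : ℝ, ∀ t ω, |V t ω| ≤ K) :
    NoArbitrageCC μ ℱ (fun t ω => X t ω + V t ω) := by
  
  rintro ⟨h, H, hpos, hspaced, hge, hgt⟩
  obtain ⟨T0, hT0⟩ := H.bounded
  obtain ⟨K0, hK0⟩ := hVbdd
  set K : ℝ := max K0 0 with hK
  have hKV : ∀ t ω, |V t ω| ≤ K := fun t ω => (hK0 t ω).trans (le_max_left _ _)
  have hKnn : (0:ℝ) ≤ K := le_max_right _ _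
  have hprog : MeasureTheory.ProgMeasurable ℱ X :=
    StronglyAdapted.progMeasurable_of_continuous (fun i => (hadapted i).stronglyMeasurable) hcont
  set tail : ℕ → Ω → ℝ := fun k ω => ∑ j ∈ Finset.Ico k H.n,
      H.g j ω * ((X (H.τ (j+1) ω) ω + V (H.τ (j+1) ω) ω)
        - (X (H.τ j ω) ω + V (H.τ j ω) ω)) with htail
  -- τ_j ≤ τ_n for 1 ≤ j ≤ n
  have hτle' : ∀ d j, 1 ≤ j → j + d ≤ H.n → ∀ ω, H.τ j ω ≤ H.τ (j + d) ω := by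
    intro d
    induction d with
    | zero => intro j _ _ ω; simp
    | succ d ih =>
      intro j hj1 hjd ω
      have h1 : H.τ j ω ≤ H.τ (j + d) ω := ih j hj1 (by omega) ω
      have h2 : H.τ (j + d) ω ≤ H.τ (j + d + 1) ω := H.mono (j + d) (by omega) (by omega) ω
      exact h1.trans h2
  have hτle : ∀ j, 1 ≤ j → j ≤ H.n → ∀ ω, H.τ j ω ≤ H.τ H.n ω := by
    intro j hj1 hjn ω
    have := hτle' (H.n - j) j hj1 (by omega) ω
    rwa [show j + (H.n - j) = H.n by omega] at this
  have hτbdd : ∀ j, 1 ≤ j → j ≤ H.n → ∀ ω, H.τ j ω ≤ T0 :=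
    fun j hj1 hjn ω => (hτle j hj1 hjn ω).trans (hT0 ω)
  -- the main downward induction
  have claim : ∀ d k (hk1 : 1 ≤ k) (hkn : k ≤ H.n), H.n ≤ k + d →
      ∀ B : Set Ω, MeasurableSet[(H.stopping k hk1 hkn).measurableSpace] B →
      (∀ᵐ ω ∂μ, ω ∈ B → 0 ≤ tail k ω) → (∀ᵐ ω ∂μ, ω ∈ B → tail k ω = 0) := by
    intro d
    induction d with
    | zero =>
      intro k hk1 hkn hkd B _ _
      have hkn' : k = H.n := by omega
      filter_upwards with ω _
      simp [htail, hkn']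
    | succ d ih =>
      intro k hk1 hkn hkd B hB hB0
      rcases Nat.lt_or_ge k H.n with hklt | hge'
      swap
      · have hkn' : k = H.n := by omega
        filter_upwards with ω _
        simp [htail, hkn']
      have hk1n : 1 ≤ k + 1 := by omega
      have hk1n' : k + 1 ≤ H.n := by omega
      set stk := H.stopping k hk1 hkn with hstk
      set stk1 := H.stopping (k+1) hk1n hk1n' with hstk1
      have hmono_st : stk.measurableSpace ≤ stk1.measurableSpace :=
        stk.measurableSpace_mono stk1 (fun ω => WithTop.coe_le_coe.mpr (H.mono k hk1 hklt ω))
      have hXk1 : Measurable[stk1.measurableSpace] (fun ω => X (H.τ (k+1) ω) ω) :=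
        measurable_stoppedValue hprog stk1
      have hXk : Measurable[stk1.measurableSpace] (fun ω => X (H.τ k ω) ω) :=
        (measurable_stoppedValue hprog stk).mono hmono_st le_rfl
      -- split of the tail sum
      have hsplit : ∀ ω, tail k ω =
          H.g k ω * ((X (H.τ (k+1) ω) ω + V (H.τ (k+1) ω) ω)
            - (X (H.τ k ω) ω + V (H.τ k ω) ω)) + tail (k+1) ω := by
        intro ω
        simp only [htail]
        exact Finset.sum_eq_sum_Ico_succ_bot hklt _
      -- time increment lies in [h, T0 + 2h]
      have htmem : ∀ ω, H.τ (k+1) ω - H.τ k ω ∈ Set.Icc h (T0 + 2*h) := by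
        intro ω
        constructor
        · exact le_tsub_of_add_le_left (hspaced k hk1 hklt ω)
        · exact tsub_le_self.trans ((hτbdd (k+1) hk1n hk1n' ω).trans le_self_add)
      have haddt : ∀ ω, H.τ k ω + (H.τ (k+1) ω - H.τ k ω) = H.τ (k+1) ω :=
        fun ω => add_tsub_cancel_of_le (H.mono k hk1 hklt ω)
      have hδT : h < T0 + 2*h := by
        rw [← NNReal.coe_lt_coe]
        push_cast
        have := NNReal.coe_pos.mpr hpos
        have : (0:ℝ) ≤ T0 := T0.coe_nonneg
        linarith [NNReal.coe_pos.mpr hpos]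
      have hCpos : (0:ℝ) < 2*K + 1 := by linarith
      -- continuity and boundedness of increments over the compact window
      have hcS : ∀ ω, Continuous fun t : ℝ≥0 => X (H.τ k ω + t) ω - X (H.τ k ω) ω :=
        fun ω => ((hcont ω).comp (continuous_const.add continuous_id)).sub continuous_const
      -- generic step: a positive-g set leads to contradiction via the down event,
      -- a negative-g set via the up event.
      have hgpos : μ (B ∩ {ω | 0 < H.g k ω}) = 0 := by
        by_contra hne
        have hApos : 0 < μ (B ∩ {ω | 0 < H.g k ω}) := pos_iff_ne_zero.mpr hne
        have hAmeas : MeasurableSet[stk.measurableSpace] (B ∩ {ω | 0 < H.g k ω}) :=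
          hB.inter (measurableSet_lt measurable_const (H.g_meas k hk1 hklt))
        obtain ⟨hdown, -⟩ := hyp (H.τ k) stk ⟨T0, hτbdd k hk1 hkn⟩ _ hAmeas hApos
          h (T0 + 2*h) hpos hδT (2*K + 1) hCpos
        set D : Set Ω := (B ∩ {ω | 0 < H.g k ω}) ∩
            {ω | X (H.τ (k+1) ω) ω - X (H.τ k ω) ω < -(2*K + 1)} with hD
        have hsub : (B ∩ {ω | 0 < H.g k ω}) ∩
            {ω | sSup ((fun t => X (H.τ k ω + t) ω - X (H.τ k ω) ω) ''
              Set.Icc h (T0 + 2*h)) < -(2*K + 1)} ⊆ D := by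
          rintro ω ⟨hω1, hω2⟩
          refine ⟨hω1, ?_⟩
          have hbdd : BddAbove ((fun t => X (H.τ k ω + t) ω - X (H.τ k ω) ω) ''
              Set.Icc h (T0 + 2*h)) := (isCompact_Icc.image (hcS ω)).bddAbove
          have hle : X (H.τ k ω + (H.τ (k+1) ω - H.τ k ω)) ω - X (H.τ k ω) ω ≤
              sSup ((fun t => X (H.τ k ω + t) ω - X (H.τ k ω) ω) ''
                Set.Icc h (T0 + 2*h)) := le_csSup hbdd ⟨_, htmem ω, rfl⟩
          rw [haddt ω] at hle
          exact (hle.trans_lt hω2)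
        have hDpos : 0 < μ D := hdown.trans_le (measure_mono hsub)
        have hDmeas : MeasurableSet[stk1.measurableSpace] D :=
          (hmono_st _ hAmeas).inter ((hXk1.sub hXk) measurableSet_Iio)
        -- on D, tail (k+1) > 0 a.e.
        have h1 : ∀ᵐ ω ∂μ, ω ∈ D → 0 < tail (k+1) ω := by
          filter_upwards [hB0] with ω hωB hωD
          obtain ⟨⟨hωB', hωg⟩, hωX⟩ := hωD
          have hV1 := hKV (H.τ (k+1) ω) ω
          have hV2 := hKV (H.τ k ω) ω
          rw [abs_le] at hV1 hV2
          have hYneg : (X (H.τ (k+1) ω) ω + V (H.τ (k+1) ω) ω)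
              - (X (H.τ k ω) ω + V (H.τ k ω) ω) < -1 := by
            have : X (H.τ (k+1) ω) ω - X (H.τ k ω) ω < -(2*K+1) := hωX
            linarith
          have htk := hωB hωB'
          have := hsplit ω
          nlinarith [mul_pos hωg (by linarith : (0:ℝ) < -((X (H.τ (k+1) ω) ω + V (H.τ (k+1) ω) ω) - (X (H.τ k ω) ω + V (H.τ k ω) ω)))]
        have h0 := ih (k+1) hk1n hk1n' (by omega) D hDmeas
          (by filter_upwards [h1] with ω hω hωD; exact (hω hωD).le)
        have hnot : ∀ᵐ ω ∂μ, ω ∉ D := by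
          filter_upwards [h1, h0] with ω a b hωD
          exact absurd (b hωD) (a hωD).ne'
        exact absurd (measure_eq_zero_iff_ae_notMem.mpr hnot) hDpos.ne'
      have hgneg : μ (B ∩ {ω | H.g k ω < 0}) = 0 := by
        by_contra hne
        have hApos : 0 < μ (B ∩ {ω | H.g k ω < 0}) := pos_iff_ne_zero.mpr hne
        have hAmeas : MeasurableSet[stk.measurableSpace] (B ∩ {ω | H.g k ω < 0}) :=
          hB.inter (measurableSet_lt (H.g_meas k hk1 hklt) measurable_const)
        obtain ⟨-, hup⟩ := hyp (H.τ k) stk ⟨T0, hτbdd k hk1 hkn⟩ _ hAmeas hApos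
          h (T0 + 2*h) hpos hδT (2*K + 1) hCpos
        set D : Set Ω := (B ∩ {ω | H.g k ω < 0}) ∩
            {ω | 2*K + 1 < X (H.τ (k+1) ω) ω - X (H.τ k ω) ω} with hD
        have hsub : (B ∩ {ω | H.g k ω < 0}) ∩
            {ω | 2*K + 1 < sInf ((fun t => X (H.τ k ω + t) ω - X (H.τ k ω) ω) ''
              Set.Icc h (T0 + 2*h))} ⊆ D := by
          rintro ω ⟨hω1, hω2⟩
          refine ⟨hω1, ?_⟩
          have hbdd : BddBelow ((fun t => X (H.τ k ω + t) ω - X (H.τ k ω) ω) ''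
              Set.Icc h (T0 + 2*h)) := (isCompact_Icc.image (hcS ω)).bddBelow
          have hle : sInf ((fun t => X (H.τ k ω + t) ω - X (H.τ k ω) ω) ''
                Set.Icc h (T0 + 2*h)) ≤
              X (H.τ k ω + (H.τ (k+1) ω - H.τ k ω)) ω - X (H.τ k ω) ω :=
            csInf_le hbdd ⟨_, htmem ω, rfl⟩
          rw [haddt ω] at hle
          exact hω2.trans_le hle
        have hDpos : 0 < μ D := hup.trans_le (measure_mono hsub)
        have hDmeas : MeasurableSet[stk1.measurableSpace] D :=
          (hmono_st _ hAmeas).inter ((hXk1.sub hXk) measurableSet_Ioi)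
        have h1 : ∀ᵐ ω ∂μ, ω ∈ D → 0 < tail (k+1) ω := by
          filter_upwards [hB0] with ω hωB hωD
          obtain ⟨⟨hωB', hωg⟩, hωX⟩ := hωD
          have hV1 := hKV (H.τ (k+1) ω) ω
          have hV2 := hKV (H.τ k ω) ω
          rw [abs_le] at hV1 hV2
          have hωg' : H.g k ω < 0 := hωg
          have hYpos : (1:ℝ) < (X (H.τ (k+1) ω) ω + V (H.τ (k+1) ω) ω)
              - (X (H.τ k ω) ω + V (H.τ k ω) ω) := by
            have : 2*K+1 < X (H.τ (k+1) ω) ω - X (H.τ k ω) ω := hωX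
            linarith
          have htk := hωB hωB'
          have := hsplit ω
          nlinarith [mul_pos (by linarith [hωg'] : (0:ℝ) < -H.g k ω) (by linarith : (0:ℝ) < (X (H.τ (k+1) ω) ω + V (H.τ (k+1) ω) ω) - (X (H.τ k ω) ω + V (H.τ k ω) ω))]
        have h0 := ih (k+1) hk1n hk1n' (by omega) D hDmeas
          (by filter_upwards [h1] with ω hω hωD; exact (hω hωD).le)
        have hnot : ∀ᵐ ω ∂μ, ω ∉ D := by
          filter_upwards [h1, h0] with ω a b hωD
          exact absurd (b hωD) (a hωD).ne'
        exact absurd (measure_eq_zero_iff_ae_notMem.mpr hnot) hDpos.ne'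
      -- hence g k = 0 a.e. on B
      have hg0 : ∀ᵐ ω ∂μ, ω ∈ B → H.g k ω = 0 := by
        have hU : μ ((B ∩ {ω | 0 < H.g k ω}) ∪ (B ∩ {ω | H.g k ω < 0})) = 0 :=
          measure_union_null hgpos hgneg
        filter_upwards [measure_eq_zero_iff_ae_notMem.mp hU] with ω hω hωB
        by_contra hne
        rcases lt_or_gt_of_ne hne with hlt | hgt'
        · exact hω (Or.inr ⟨hωB, hlt⟩)
        · exact hω (Or.inl ⟨hωB, hgt'⟩)
      have htl : ∀ᵐ ω ∂μ, ω ∈ B → tail k ω = tail (k+1) ω := by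
        filter_upwards [hg0] with ω hω hωB
        rw [hsplit ω, hω hωB, zero_mul, zero_add]
      have hfin := ih (k+1) hk1n hk1n' (by omega) B (hmono_st _ hB)
        (by filter_upwards [hB0, htl] with ω a b hωB; rw [← b hωB]; exact a hωB)
      filter_upwards [hfin, htl] with ω a b hωB
      rw [b hωB, a hωB]
  -- conclude
  have hone : (1:ℕ) ≤ H.n := by have := H.two_le; omega
  have hmain := claim H.n 1 le_rfl hone (by omega) Set.univ MeasurableSet.univ
    (by filter_upwards [hge] with ω hω _; exact hω)
  have hnull : μ {ω | 0 < H.gains (fun t ω => X t ω + V t ω) ω} = 0 := by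
    have hnm : ∀ᵐ ω ∂μ, ω ∉ {ω | 0 < H.gains (fun t ω => X t ω + V t ω) ω} := by
      filter_upwards [hmain] with ω hω
      have : tail 1 ω = 0 := hω trivial
      simp only [Set.mem_setOf_eq, not_lt]
      rw [show H.gains (fun t ω => X t ω + V t ω) ω = tail 1 ω from rfl, this]
    exact measure_eq_zero_iff_ae_notMem.mpr hnm
  exact absurd hnull hgt.ne'
end
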